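/- There exist finite uniformly labeled graphs G_1 and G_2 and vertices u ∈ V(G_1), v ∈ V(G_2) such that for some height h the unfolding trees F_h^u and F_h^v are not isomorphic, while for every height h the 1-redundant neighborhood trees T_{h,1}^u and T_{h,1}^v are isomorphic. Hence there exist vertices that unfolding trees (1-WL) distinguish but 1-NTs do not (part 2 of the expressivity-incomparability theorem). -/

import Mathlib

open scoped Classical

universe u v

/-- A rooted labeled (unordered) tree: a root label together with a list of
child subtrees.  The list order is irrelevant for the isomorphism relation. -/
inductive LTree (L : Type u) : Type u
  | node : L → List (LTree L) → LTree L

namespace LTree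

variable {L : Type u} {L' C : Type v}

/-- The label of the root. -/
def label : LTree L → L
  | node a _ => a

/-- The child subtrees of the root. -/
def children : LTree L → List (LTree L)
  | node _ ts => ts

/-- Isomorphism of rooted labeled trees: there is a bijection between the node
sets preserving the root, the parent–child relation and node labels; for our
representation this means equal root labels and children that correspond, up to
a permutation, to pairwise isomorphic subtrees. -/
inductive Iso : LTree L → LTree L → Prop
  | node (a : L) {ts us vs : List (LTree L)} :
      List.Forall₂ Iso ts vs → vs.Perm us → Iso (node a ts) (node a us)

/-- `Embeds t s` : `t` is an induced rooted subtree of `s`, i.e. the nodes of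
`t` inject into the nodes of `s` preserving the root, labels and the
parent–child relation. -/
inductive Embeds : LTree L → LTree L → Prop
  | node (a : L) {ts us vs : List (LTree L)} :
      List.Forall₂ Embeds ts vs → vs.Subperm us → Embeds (node a ts) (node a us)

/-- Number of nodes of a rooted tree. -/
def size : LTree L → ℕ
  | node _ ts => 1 + (ts.attach.map (fun c => size c.1)).sum
decreasing_by simp_wf; have := List.sizeOf_lt_of_mem c.2; omega

/-- Relabel a tree by `f`. -/
def map (f : L → L') : LTree L → LTree L'
  | node a ts => node (f a) (ts.attach.map (fun c => map f c.1))
decreasing_by simp_wf; have := List.sizeOf_lt_of_mem c.2; omega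

/-- Number of nodes of the tree carrying label `x`. -/
def countLabel [DecidableEq L] (x : L) : LTree L → ℕ
  | node a ts => (if a = x then 1 else 0) + (ts.attach.map (fun c => countLabel x c.1)).sum
decreasing_by simp_wf; have := List.sizeOf_lt_of_mem c.2; omega

/-- Number of nodes at depth `d` carrying label `x`. -/
def countAt [DecidableEq L] (x : L) : ℕ → LTree L → ℕ
  | 0, node a _ => if a = x then 1 else 0
  | d+1, node _ ts => (ts.attach.map (fun c => countAt x d c.1)).sum
termination_by _ t => sizeOf t
decreasing_by simp_wf; have := List.sizeOf_lt_of_mem c.2; omega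

/-- `SubtreeAt t d s` : `s` is the subtree of `t` rooted at one of the nodes of
`t` at depth `d`. -/
inductive SubtreeAt : LTree L → ℕ → LTree L → Prop
  | refl (t : LTree L) : SubtreeAt t 0 t
  | step {t c s : LTree L} {d : ℕ} : c ∈ t.children → SubtreeAt c d s → SubtreeAt t (d+1) s

/-- The AHU canonical value: `ahu f t = f (label t) {{ ahu f c | c child of t }}`,
computed bottom-up (a leaf gets `f (label) ∅`). -/
noncomputable def ahu (f : L → Multiset C → C) : LTree L → C
  | node a ts => f a (↑(ts.attach.map (fun c => ahu f c.1)) : Multiset C)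
decreasing_by simp_wf; have := List.sizeOf_lt_of_mem c.2; omega

end LTree

section Graph

variable {V : Type u} {X : Type v}

/-- The unfolding tree `F_i^v` of height `i` of the vertex `v`, with node labels
given by `μ` (a node representing the graph vertex `x` is labeled `μ x`). -/
noncomputable def SimpleGraph.unfoldingTree (G : SimpleGraph V) [Fintype V] (μ : V → X) :
    ℕ → V → LTree X
  | 0, u => .node (μ u) []
  | i+1, u => .node (μ u) ((G.neighborFinset u).toList.map (G.unfoldingTree μ i))

/-- Auxiliary recursion for `k`-redundant neighborhood trees: `r` is the root
vertex, `d` is the current depth and `x` the currently represented vertex.  A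
neighbor `y` is kept at depth `d + 1` iff `d + 1 ≤ dist r y + k`; since the
minimal depth at which `y` occurs in the unfolding tree rooted at `r` is
`dist r y`, this is exactly the pruning condition
`depth(u) ≤ depth(w) + k` for all nodes `w` with `φ(u) = φ(w)`. -/
noncomputable def SimpleGraph.ntAux (G : SimpleGraph V) [Fintype V] (μ : V → X)
    (r : V) (k : ℕ) : ℕ → ℕ → V → LTree X
  | 0, _, x => .node (μ x) []
  | i+1, d, x => .node (μ x)
      (((G.neighborFinset x).filter (fun y => d + 1 ≤ G.dist r y + k)).toList.map
        (G.ntAux μ r k i (d+1)))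

/-- The `k`-redundant neighborhood tree `T_{i,k}^v` of height `i` of vertex `v`. -/
noncomputable def SimpleGraph.ntTree (G : SimpleGraph V) [Fintype V] (μ : V → X)
    (i k : ℕ) (v : V) : LTree X :=
  G.ntAux μ v k i 0 v

end Graph

/-! ### Auxiliary lemmas for the proof -/

namespace LTree

theorem size_node' {L : Type u} (a : L) (ts : List (LTree L)) :
    (node a ts).size = 1 + (ts.map size).sum := by
  rw [size, List.attach_map_val]

theorem iso_refl' {L : Type u} : ∀ t : LTree L, Iso t t
  | node a ts =>
      Iso.node a (List.forall₂_same.2 fun x hx => iso_refl' x) (List.Perm.refl ts)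
decreasing_by have := List.sizeOf_lt_of_mem hx; simp; omega

theorem sum_size_congr {L : Type u} {ts vs : List (LTree L)}
    (h : List.Forall₂ Iso ts vs) :
    (∀ t ∈ ts, ∀ u, Iso t u → size t = size u) →
    (ts.map size).sum = (vs.map size).sum := by
  induction h with
  | nil => intro _; rfl
  | @cons a b l₁ l₂ h1 h2 ih =>
      intro H
      simp only [List.map_cons, List.sum_cons]
      rw [H _ List.mem_cons_self _ h1,
        ih (fun t ht u hu => H t (List.mem_cons_of_mem _ ht) u hu)]

theorem iso_size_aux {L : Type u} :
    ∀ n : ℕ, ∀ t u : LTree L, sizeOf t ≤ n → Iso t u → size t = size u := by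
  intro n
  induction n with
  | zero =>
      intro t u hle h
      cases t with
      | node a ts => simp at hle
  | succ n ih =>
      intro t u hle h
      cases h with
      | @node a ts us vs hf hp =>
        rw [size_node', size_node', sum_size_congr hf ?_, (hp.map size).sum_eq]
        intro t' ht' u' hu'
        refine ih t' u' ?_ hu'
        have h1 := List.sizeOf_lt_of_mem ht'
        simp at hle
        omega

theorem iso_size' {L : Type u} (t u : LTree L) (h : Iso t u) : size t = size u :=
  iso_size_aux (sizeOf t) t u le_rfl h

end LTree

lemma map_of_all_eq {α β : Type*} {f : α → β} {b : β} :
    ∀ {l : List α}, (∀ a ∈ l, f a = b) → l.map f = List.replicate l.length b := by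
  intro l h
  induction l with
  | nil => rfl
  | cons a l ih =>
      simp only [List.map_cons, List.length_cons, List.replicate_succ]
      rw [h a (by simp), ih (fun x hx => h x (by simp [hx]))]

lemma sum_toList_map {α : Type} (s : Finset α) (f : α → ℕ) :
    (s.toList.map f).sum = ∑ x ∈ s, f x := by
  rw [Finset.sum, ← Finset.coe_toList s, Multiset.map_coe, Multiset.sum_coe]

/-! ### The two example graphs -/

def E1 : List (Fin 6 × Fin 6) :=
  [(0,1),(0,2),(0,3),(0,4),(0,5),(1,2),(1,3),(2,3),(4,5)]
def E2 : List (Fin 6 × Fin 6) :=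
  [(0,1),(0,2),(0,3),(0,4),(0,5),(1,2),(2,3),(3,4),(4,5)]

def g1 : SimpleGraph (Fin 6) := SimpleGraph.fromRel (fun a b => (a,b) ∈ E1)
def g2 : SimpleGraph (Fin 6) := SimpleGraph.fromRel (fun a b => (a,b) ∈ E2)

def mu : Fin 6 → Unit := fun _ => ()
def lf : LTree Unit := .node () []
def P (n : ℕ) : LTree Unit := .node () (List.replicate n lf)

lemma nb1_0 : g1.neighborFinset 0 = ({1,2,3,4,5} : Finset (Fin 6)) := by
  ext z
  rw [SimpleGraph.mem_neighborFinset]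
  simp only [g1, SimpleGraph.fromRel_adj]
  revert z; decide

lemma nb1_1 : g1.neighborFinset 1 = ({0,2,3} : Finset (Fin 6)) := by
  ext z
  rw [SimpleGraph.mem_neighborFinset]
  simp only [g1, SimpleGraph.fromRel_adj]
  revert z; decide

lemma nb1_2 : g1.neighborFinset 2 = ({0,1,3} : Finset (Fin 6)) := by
  ext z
  rw [SimpleGraph.mem_neighborFinset]
  simp only [g1, SimpleGraph.fromRel_adj]
  revert z; decide

lemma nb1_3 : g1.neighborFinset 3 = ({0,1,2} : Finset (Fin 6)) := by
  ext z
  rw [SimpleGraph.mem_neighborFinset]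
  simp only [g1, SimpleGraph.fromRel_adj]
  revert z; decide

lemma nb1_4 : g1.neighborFinset 4 = ({0,5} : Finset (Fin 6)) := by
  ext z
  rw [SimpleGraph.mem_neighborFinset]
  simp only [g1, SimpleGraph.fromRel_adj]
  revert z; decide

lemma nb1_5 : g1.neighborFinset 5 = ({0,4} : Finset (Fin 6)) := by
  ext z
  rw [SimpleGraph.mem_neighborFinset]
  simp only [g1, SimpleGraph.fromRel_adj]
  revert z; decide

lemma nb2_0 : g2.neighborFinset 0 = ({1,2,3,4,5} : Finset (Fin 6)) := by
  ext z
  rw [SimpleGraph.mem_neighborFinset]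
  simp only [g2, SimpleGraph.fromRel_adj]
  revert z; decide

lemma nb2_1 : g2.neighborFinset 1 = ({0,2} : Finset (Fin 6)) := by
  ext z
  rw [SimpleGraph.mem_neighborFinset]
  simp only [g2, SimpleGraph.fromRel_adj]
  revert z; decide

lemma nb2_2 : g2.neighborFinset 2 = ({0,1,3} : Finset (Fin 6)) := by
  ext z
  rw [SimpleGraph.mem_neighborFinset]
  simp only [g2, SimpleGraph.fromRel_adj]
  revert z; decide

lemma nb2_3 : g2.neighborFinset 3 = ({0,2,4} : Finset (Fin 6)) := by
  ext z
  rw [SimpleGraph.mem_neighborFinset]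
  simp only [g2, SimpleGraph.fromRel_adj]
  revert z; decide

lemma nb2_4 : g2.neighborFinset 4 = ({0,3,5} : Finset (Fin 6)) := by
  ext z
  rw [SimpleGraph.mem_neighborFinset]
  simp only [g2, SimpleGraph.fromRel_adj]
  revert z; decide

lemma nb2_5 : g2.neighborFinset 5 = ({0,4} : Finset (Fin 6)) := by
  ext z
  rw [SimpleGraph.mem_neighborFinset]
  simp only [g2, SimpleGraph.fromRel_adj]
  revert z; decide

/-! ### Distance facts -/

lemma adj1_univ : ∀ z : Fin 6, z ≠ 0 → g1.Adj 0 z := by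
  simp only [g1, SimpleGraph.fromRel_adj]; decide

lemma adj2_univ : ∀ z : Fin 6, z ≠ 0 → g2.Adj 0 z := by
  simp only [g2, SimpleGraph.fromRel_adj]; decide

lemma hd1 : ∀ z : Fin 6, z ≠ 0 → g1.dist 0 z = 1 := fun z hz =>
  SimpleGraph.dist_eq_one_iff_adj.2 (adj1_univ z hz)
lemma hd2 : ∀ z : Fin 6, z ≠ 0 → g2.dist 0 z = 1 := fun z hz =>
  SimpleGraph.dist_eq_one_iff_adj.2 (adj2_univ z hz)

section NT

variable {G : SimpleGraph (Fin 6)}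

lemma dle (hd : ∀ z : Fin 6, z ≠ 0 → G.dist 0 z = 1) (z : Fin 6) : G.dist 0 z ≤ 1 := by
  by_cases h : z = 0
  · subst h; simp [SimpleGraph.dist_self]
  · rw [hd z h]

lemma ntAux_zero (G : SimpleGraph (Fin 6)) (d : ℕ) (x : Fin 6) :
    G.ntAux mu 0 1 0 d x = .node () [] := by
  simp [SimpleGraph.ntAux]

lemma ntAux_succ (G : SimpleGraph (Fin 6)) (i d : ℕ) (x : Fin 6) :
    G.ntAux mu 0 1 (i+1) d x = .node ()
      (((G.neighborFinset x).filter (fun y => d + 1 ≤ G.dist 0 y + 1)).toList.map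
        (G.ntAux mu 0 1 i (d+1))) := by
  simp [SimpleGraph.ntAux]

lemma ntAux_two (hd : ∀ z : Fin 6, z ≠ 0 → G.dist 0 z = 1) :
    ∀ (i : ℕ) (x : Fin 6), G.ntAux mu 0 1 i 2 x = .node () []
  | 0, x => ntAux_zero G 2 x
  | i+1, x => by
    rw [ntAux_succ,
      Finset.filter_false_of_mem (fun y _ => by have := dle hd y; omega),
      Finset.toList_empty, List.map_nil]

lemma ntAux_one (hd : ∀ z : Fin 6, z ≠ 0 → G.dist 0 z = 1) (i : ℕ) (y : Fin 6) :
    G.ntAux mu 0 1 (i+1) 1 y = P ((G.neighborFinset y).erase 0).card := by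
  rw [ntAux_succ]
  have h1 : (G.neighborFinset y).filter (fun z => 1 + 1 ≤ G.dist 0 z + 1)
      = (G.neighborFinset y).erase 0 := by
    ext z
    simp only [Finset.mem_filter, Finset.mem_erase]
    constructor
    · rintro ⟨hz, hle⟩
      refine ⟨fun h => ?_, hz⟩
      subst h
      rw [SimpleGraph.dist_self] at hle
      omega
    · rintro ⟨hne, hz⟩
      exact ⟨hz, by rw [hd z hne]⟩
  rw [h1, map_of_all_eq (fun z _ => ntAux_two hd i z), Finset.length_toList]
  rfl

lemma ntTree_zero (G : SimpleGraph (Fin 6)) : G.ntTree mu 0 1 0 = .node () [] := by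
  simp only [SimpleGraph.ntTree]
  exact ntAux_zero G 0 0

lemma ntTree_one (G : SimpleGraph (Fin 6)) :
    G.ntTree mu 1 1 0 = .node () (List.replicate (G.neighborFinset 0).card lf) := by
  simp only [SimpleGraph.ntTree]
  rw [ntAux_succ, Finset.filter_true_of_mem (fun y _ => by omega),
    map_of_all_eq (fun z _ => ntAux_zero G 1 z), Finset.length_toList]
  rfl

lemma ntTree_big (hd : ∀ z : Fin 6, z ≠ 0 → G.dist 0 z = 1) (i : ℕ) :
    G.ntTree mu (i+2) 1 0 = .node ()
      ((G.neighborFinset 0).toList.map (fun y => P ((G.neighborFinset y).erase 0).card)) := by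
  simp only [SimpleGraph.ntTree]
  rw [ntAux_succ, Finset.filter_true_of_mem (fun y _ => by omega)]
  exact congrArg _ (List.map_congr_left fun y _ => ntAux_one hd i y)

end NT

lemma toList5 : ({1,2,3,4,5} : Finset (Fin 6)).toList.Perm [1,2,3,4,5] := by
  apply Multiset.coe_eq_coe.mp
  rw [Finset.coe_toList]
  decide

/-! ### Size computations -/

lemma size_zero (G : SimpleGraph (Fin 6)) (u : Fin 6) :
    (G.unfoldingTree mu 0 u).size = 1 := by
  simp only [SimpleGraph.unfoldingTree]
  rw [LTree.size_node']
  rfl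

lemma size_step (G : SimpleGraph (Fin 6)) (h : ℕ) (u : Fin 6) :
    (G.unfoldingTree mu (h+1) u).size
      = 1 + ∑ y ∈ G.neighborFinset u, (G.unfoldingTree mu h y).size := by
  simp only [SimpleGraph.unfoldingTree]
  rw [LTree.size_node', List.map_map, sum_toList_map]
  rfl

lemma s1_1_0 : (g1.unfoldingTree mu 1 (0 : Fin 6)).size = 6 := by
  show (g1.unfoldingTree mu (0+1) (0 : Fin 6)).size = 6
  rw [size_step, nb1_0, Finset.sum_insert (by decide), Finset.sum_insert (by decide), Finset.sum_insert (by decide), Finset.sum_insert (by decide), Finset.sum_singleton]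
  simp only [size_zero]
  norm_num


lemma s1_1_1 : (g1.unfoldingTree mu 1 (1 : Fin 6)).size = 4 := by
  show (g1.unfoldingTree mu (0+1) (1 : Fin 6)).size = 4
  rw [size_step, nb1_1, Finset.sum_insert (by decide), Finset.sum_insert (by decide), Finset.sum_singleton]
  simp only [size_zero]
  norm_num


lemma s1_1_2 : (g1.unfoldingTree mu 1 (2 : Fin 6)).size = 4 := by
  show (g1.unfoldingTree mu (0+1) (2 : Fin 6)).size = 4
  rw [size_step, nb1_2, Finset.sum_insert (by decide), Finset.sum_insert (by decide), Finset.sum_singleton]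
  simp only [size_zero]
  norm_num


lemma s1_1_3 : (g1.unfoldingTree mu 1 (3 : Fin 6)).size = 4 := by
  show (g1.unfoldingTree mu (0+1) (3 : Fin 6)).size = 4
  rw [size_step, nb1_3, Finset.sum_insert (by decide), Finset.sum_insert (by decide), Finset.sum_singleton]
  simp only [size_zero]
  norm_num


lemma s1_1_4 : (g1.unfoldingTree mu 1 (4 : Fin 6)).size = 3 := by
  show (g1.unfoldingTree mu (0+1) (4 : Fin 6)).size = 3
  rw [size_step, nb1_4, Finset.sum_insert (by decide), Finset.sum_singleton]
  simp only [size_zero]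
  norm_num


lemma s1_1_5 : (g1.unfoldingTree mu 1 (5 : Fin 6)).size = 3 := by
  show (g1.unfoldingTree mu (0+1) (5 : Fin 6)).size = 3
  rw [size_step, nb1_5, Finset.sum_insert (by decide), Finset.sum_singleton]
  simp only [size_zero]
  norm_num


lemma s1_2_0 : (g1.unfoldingTree mu 2 (0 : Fin 6)).size = 19 := by
  show (g1.unfoldingTree mu (1+1) (0 : Fin 6)).size = 19
  rw [size_step, nb1_0, Finset.sum_insert (by decide), Finset.sum_insert (by decide), Finset.sum_insert (by decide), Finset.sum_insert (by decide), Finset.sum_singleton, s1_1_1, s1_1_2, s1_1_3, s1_1_4, s1_1_5]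
  norm_num


lemma s1_2_1 : (g1.unfoldingTree mu 2 (1 : Fin 6)).size = 15 := by
  show (g1.unfoldingTree mu (1+1) (1 : Fin 6)).size = 15
  rw [size_step, nb1_1, Finset.sum_insert (by decide), Finset.sum_insert (by decide), Finset.sum_singleton, s1_1_0, s1_1_2, s1_1_3]
  norm_num


lemma s1_2_2 : (g1.unfoldingTree mu 2 (2 : Fin 6)).size = 15 := by
  show (g1.unfoldingTree mu (1+1) (2 : Fin 6)).size = 15
  rw [size_step, nb1_2, Finset.sum_insert (by decide), Finset.sum_insert (by decide), Finset.sum_singleton, s1_1_0, s1_1_1, s1_1_3]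
  norm_num


lemma s1_2_3 : (g1.unfoldingTree mu 2 (3 : Fin 6)).size = 15 := by
  show (g1.unfoldingTree mu (1+1) (3 : Fin 6)).size = 15
  rw [size_step, nb1_3, Finset.sum_insert (by decide), Finset.sum_insert (by decide), Finset.sum_singleton, s1_1_0, s1_1_1, s1_1_2]
  norm_num


lemma s1_2_4 : (g1.unfoldingTree mu 2 (4 : Fin 6)).size = 10 := by
  show (g1.unfoldingTree mu (1+1) (4 : Fin 6)).size = 10
  rw [size_step, nb1_4, Finset.sum_insert (by decide), Finset.sum_singleton, s1_1_0, s1_1_5]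
  norm_num


lemma s1_2_5 : (g1.unfoldingTree mu 2 (5 : Fin 6)).size = 10 := by
  show (g1.unfoldingTree mu (1+1) (5 : Fin 6)).size = 10
  rw [size_step, nb1_5, Finset.sum_insert (by decide), Finset.sum_singleton, s1_1_0, s1_1_4]
  norm_num


lemma s1_3_1 : (g1.unfoldingTree mu 3 (1 : Fin 6)).size = 50 := by
  show (g1.unfoldingTree mu (2+1) (1 : Fin 6)).size = 50
  rw [size_step, nb1_1, Finset.sum_insert (by decide), Finset.sum_insert (by decide), Finset.sum_singleton, s1_2_0, s1_2_2, s1_2_3]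
  norm_num


lemma s1_3_2 : (g1.unfoldingTree mu 3 (2 : Fin 6)).size = 50 := by
  show (g1.unfoldingTree mu (2+1) (2 : Fin 6)).size = 50
  rw [size_step, nb1_2, Finset.sum_insert (by decide), Finset.sum_insert (by decide), Finset.sum_singleton, s1_2_0, s1_2_1, s1_2_3]
  norm_num


lemma s1_3_3 : (g1.unfoldingTree mu 3 (3 : Fin 6)).size = 50 := by
  show (g1.unfoldingTree mu (2+1) (3 : Fin 6)).size = 50
  rw [size_step, nb1_3, Finset.sum_insert (by decide), Finset.sum_insert (by decide), Finset.sum_singleton, s1_2_0, s1_2_1, s1_2_2]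
  norm_num


lemma s1_3_4 : (g1.unfoldingTree mu 3 (4 : Fin 6)).size = 30 := by
  show (g1.unfoldingTree mu (2+1) (4 : Fin 6)).size = 30
  rw [size_step, nb1_4, Finset.sum_insert (by decide), Finset.sum_singleton, s1_2_0, s1_2_5]
  norm_num


lemma s1_3_5 : (g1.unfoldingTree mu 3 (5 : Fin 6)).size = 30 := by
  show (g1.unfoldingTree mu (2+1) (5 : Fin 6)).size = 30
  rw [size_step, nb1_5, Finset.sum_insert (by decide), Finset.sum_singleton, s1_2_0, s1_2_4]
  norm_num


lemma s1_4_0 : (g1.unfoldingTree mu 4 (0 : Fin 6)).size = 211 := by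
  show (g1.unfoldingTree mu (3+1) (0 : Fin 6)).size = 211
  rw [size_step, nb1_0, Finset.sum_insert (by decide), Finset.sum_insert (by decide), Finset.sum_insert (by decide), Finset.sum_insert (by decide), Finset.sum_singleton, s1_3_1, s1_3_2, s1_3_3, s1_3_4, s1_3_5]
  norm_num


lemma s2_1_0 : (g2.unfoldingTree mu 1 (0 : Fin 6)).size = 6 := by
  show (g2.unfoldingTree mu (0+1) (0 : Fin 6)).size = 6
  rw [size_step, nb2_0, Finset.sum_insert (by decide), Finset.sum_insert (by decide), Finset.sum_insert (by decide), Finset.sum_insert (by decide), Finset.sum_singleton]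
  simp only [size_zero]
  norm_num


lemma s2_1_1 : (g2.unfoldingTree mu 1 (1 : Fin 6)).size = 3 := by
  show (g2.unfoldingTree mu (0+1) (1 : Fin 6)).size = 3
  rw [size_step, nb2_1, Finset.sum_insert (by decide), Finset.sum_singleton]
  simp only [size_zero]
  norm_num


lemma s2_1_2 : (g2.unfoldingTree mu 1 (2 : Fin 6)).size = 4 := by
  show (g2.unfoldingTree mu (0+1) (2 : Fin 6)).size = 4
  rw [size_step, nb2_2, Finset.sum_insert (by decide), Finset.sum_insert (by decide), Finset.sum_singleton]
  simp only [size_zero]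
  norm_num


lemma s2_1_3 : (g2.unfoldingTree mu 1 (3 : Fin 6)).size = 4 := by
  show (g2.unfoldingTree mu (0+1) (3 : Fin 6)).size = 4
  rw [size_step, nb2_3, Finset.sum_insert (by decide), Finset.sum_insert (by decide), Finset.sum_singleton]
  simp only [size_zero]
  norm_num


lemma s2_1_4 : (g2.unfoldingTree mu 1 (4 : Fin 6)).size = 4 := by
  show (g2.unfoldingTree mu (0+1) (4 : Fin 6)).size = 4
  rw [size_step, nb2_4, Finset.sum_insert (by decide), Finset.sum_insert (by decide), Finset.sum_singleton]
  simp only [size_zero]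
  norm_num


lemma s2_1_5 : (g2.unfoldingTree mu 1 (5 : Fin 6)).size = 3 := by
  show (g2.unfoldingTree mu (0+1) (5 : Fin 6)).size = 3
  rw [size_step, nb2_5, Finset.sum_insert (by decide), Finset.sum_singleton]
  simp only [size_zero]
  norm_num


lemma s2_2_0 : (g2.unfoldingTree mu 2 (0 : Fin 6)).size = 19 := by
  show (g2.unfoldingTree mu (1+1) (0 : Fin 6)).size = 19
  rw [size_step, nb2_0, Finset.sum_insert (by decide), Finset.sum_insert (by decide), Finset.sum_insert (by decide), Finset.sum_insert (by decide), Finset.sum_singleton, s2_1_1, s2_1_2, s2_1_3, s2_1_4, s2_1_5]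
  norm_num


lemma s2_2_1 : (g2.unfoldingTree mu 2 (1 : Fin 6)).size = 11 := by
  show (g2.unfoldingTree mu (1+1) (1 : Fin 6)).size = 11
  rw [size_step, nb2_1, Finset.sum_insert (by decide), Finset.sum_singleton, s2_1_0, s2_1_2]
  norm_num


lemma s2_2_2 : (g2.unfoldingTree mu 2 (2 : Fin 6)).size = 14 := by
  show (g2.unfoldingTree mu (1+1) (2 : Fin 6)).size = 14
  rw [size_step, nb2_2, Finset.sum_insert (by decide), Finset.sum_insert (by decide), Finset.sum_singleton, s2_1_0, s2_1_1, s2_1_3]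
  norm_num


lemma s2_2_3 : (g2.unfoldingTree mu 2 (3 : Fin 6)).size = 15 := by
  show (g2.unfoldingTree mu (1+1) (3 : Fin 6)).size = 15
  rw [size_step, nb2_3, Finset.sum_insert (by decide), Finset.sum_insert (by decide), Finset.sum_singleton, s2_1_0, s2_1_2, s2_1_4]
  norm_num


lemma s2_2_4 : (g2.unfoldingTree mu 2 (4 : Fin 6)).size = 14 := by
  show (g2.unfoldingTree mu (1+1) (4 : Fin 6)).size = 14
  rw [size_step, nb2_4, Finset.sum_insert (by decide), Finset.sum_insert (by decide), Finset.sum_singleton, s2_1_0, s2_1_3, s2_1_5]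
  norm_num


lemma s2_2_5 : (g2.unfoldingTree mu 2 (5 : Fin 6)).size = 11 := by
  show (g2.unfoldingTree mu (1+1) (5 : Fin 6)).size = 11
  rw [size_step, nb2_5, Finset.sum_insert (by decide), Finset.sum_singleton, s2_1_0, s2_1_4]
  norm_num


lemma s2_3_1 : (g2.unfoldingTree mu 3 (1 : Fin 6)).size = 34 := by
  show (g2.unfoldingTree mu (2+1) (1 : Fin 6)).size = 34
  rw [size_step, nb2_1, Finset.sum_insert (by decide), Finset.sum_singleton, s2_2_0, s2_2_2]
  norm_num


lemma s2_3_2 : (g2.unfoldingTree mu 3 (2 : Fin 6)).size = 46 := by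
  show (g2.unfoldingTree mu (2+1) (2 : Fin 6)).size = 46
  rw [size_step, nb2_2, Finset.sum_insert (by decide), Finset.sum_insert (by decide), Finset.sum_singleton, s2_2_0, s2_2_1, s2_2_3]
  norm_num


lemma s2_3_3 : (g2.unfoldingTree mu 3 (3 : Fin 6)).size = 48 := by
  show (g2.unfoldingTree mu (2+1) (3 : Fin 6)).size = 48
  rw [size_step, nb2_3, Finset.sum_insert (by decide), Finset.sum_insert (by decide), Finset.sum_singleton, s2_2_0, s2_2_2, s2_2_4]
  norm_num


lemma s2_3_4 : (g2.unfoldingTree mu 3 (4 : Fin 6)).size = 46 := by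
  show (g2.unfoldingTree mu (2+1) (4 : Fin 6)).size = 46
  rw [size_step, nb2_4, Finset.sum_insert (by decide), Finset.sum_insert (by decide), Finset.sum_singleton, s2_2_0, s2_2_3, s2_2_5]
  norm_num


lemma s2_3_5 : (g2.unfoldingTree mu 3 (5 : Fin 6)).size = 34 := by
  show (g2.unfoldingTree mu (2+1) (5 : Fin 6)).size = 34
  rw [size_step, nb2_5, Finset.sum_insert (by decide), Finset.sum_singleton, s2_2_0, s2_2_4]
  norm_num


lemma s2_4_0 : (g2.unfoldingTree mu 4 (0 : Fin 6)).size = 209 := by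
  show (g2.unfoldingTree mu (3+1) (0 : Fin 6)).size = 209
  rw [size_step, nb2_0, Finset.sum_insert (by decide), Finset.sum_insert (by decide), Finset.sum_insert (by decide), Finset.sum_insert (by decide), Finset.sum_singleton, s2_3_1, s2_3_2, s2_3_3, s2_3_4, s2_3_5]
  norm_num

theorem nt_iso_all (h : ℕ) : LTree.Iso (g1.ntTree mu h 1 0) (g2.ntTree mu h 1 0) := by
  match h with
  | 0 =>
    rw [ntTree_zero, ntTree_zero]
    exact LTree.iso_refl' _
  | 1 =>
    rw [ntTree_one, ntTree_one, show (g1.neighborFinset 0).card = 5 by rw [nb1_0]; decide,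
      show (g2.neighborFinset 0).card = 5 by rw [nb2_0]; decide]
    exact LTree.iso_refl' _
  | (i+2) =>
    rw [ntTree_big hd1 i, ntTree_big hd2 i]
    have p1 : (g1.neighborFinset 0).toList.Perm [1,2,3,4,5] := by rw [nb1_0]; exact toList5
    have p2 : (g2.neighborFinset 0).toList.Perm [1,2,3,4,5] := by rw [nb2_0]; exact toList5
    have hm1 : (([1,2,3,4,5] : List (Fin 6)).map
        (fun y => P ((g1.neighborFinset y).erase 0).card)) = [P 2, P 2, P 2, P 1, P 1] := by
      simp only [List.map_cons, List.map_nil, nb1_1, nb1_2, nb1_3, nb1_4, nb1_5,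
        show (({0,2,3} : Finset (Fin 6)).erase 0).card = 2 from by decide,
        show (({0,1,3} : Finset (Fin 6)).erase 0).card = 2 from by decide,
        show (({0,1,2} : Finset (Fin 6)).erase 0).card = 2 from by decide,
        show (({0,5} : Finset (Fin 6)).erase 0).card = 1 from by decide,
        show (({0,4} : Finset (Fin 6)).erase 0).card = 1 from by decide]
    have hm2 : (([1,2,3,4,5] : List (Fin 6)).map
        (fun y => P ((g2.neighborFinset y).erase 0).card)) = [P 1, P 2, P 2, P 2, P 1] := by
      simp only [List.map_cons, List.map_nil, nb2_1, nb2_2, nb2_3, nb2_4, nb2_5,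
        show (({0,2} : Finset (Fin 6)).erase 0).card = 1 from by decide,
        show (({0,1,3} : Finset (Fin 6)).erase 0).card = 2 from by decide,
        show (({0,2,4} : Finset (Fin 6)).erase 0).card = 2 from by decide,
        show (({0,3,5} : Finset (Fin 6)).erase 0).card = 2 from by decide,
        show (({0,4} : Finset (Fin 6)).erase 0).card = 1 from by decide]
    have q1 := (p1.map (fun y => P ((g1.neighborFinset y).erase 0).card))
    rw [hm1] at q1
    have q2 := (p2.map (fun y => P ((g2.neighborFinset y).erase 0).card))
    rw [hm2] at q2
    have pm : ([P 2, P 2, P 2, P 1, P 1] : List (LTree Unit)).Perm [P 1, P 2, P 2, P 2, P 1] :=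
      List.perm_middle (a := P 1) (l₁ := [P 2, P 2, P 2]) (l₂ := [P 1])
    exact LTree.Iso.node () (List.forall₂_same.2 fun x _ => LTree.iso_refl' x)
      (q1.trans (pm.trans q2.symm))

/-- There exist finite uniformly labeled graphs `G₁, G₂` and
vertices `u ∈ V(G₁)`, `v ∈ V(G₂)` such that for some height `h` the unfolding
trees `F_h^u` and `F_h^v` are not isomorphic, while for every height `h` the
1-redundant neighborhood trees `T_{h,1}^u` and `T_{h,1}^v` are isomorphic. -/
theorem exists_wl_distinguishes_but_not_oneNT :
    ∃ (n₁ n₂ : ℕ) (G₁ : SimpleGraph (Fin n₁)) (G₂ : SimpleGraph (Fin n₂))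
      (u : Fin n₁) (v : Fin n₂),
      (∃ h : ℕ, ¬ LTree.Iso (G₁.unfoldingTree (fun _ => ()) h u)
          (G₂.unfoldingTree (fun _ => ()) h v)) ∧
      (∀ h : ℕ, LTree.Iso (G₁.ntTree (fun _ => ()) h 1 u)
          (G₂.ntTree (fun _ => ()) h 1 v)) := by
  refine ⟨6, 6, g1, g2, 0, 0, ⟨4, fun hiso => ?_⟩, fun h => nt_iso_all h⟩
  have := LTree.iso_size' _ _ hiso
  rw [show g1.unfoldingTree (fun _ => ()) 4 0 = g1.unfoldingTree mu 4 0 from rfl,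
    show g2.unfoldingTree (fun _ => ()) 4 0 = g2.unfoldingTree mu 4 0 from rfl,
    s1_4_0, s2_4_0] at this
  omega
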